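/- Let f : ℍ → ℍ be the function f(w) = |w| (the quaternion norm of w, regarded as a real quaternion). Then at every point w ≠ 0, the HR*-derivative of f equals (1/4)·w/|w|; that is, ∂|w|/∂w* = (1/4)·sgn(w), where sgn(w) = w/|w| for w ≠ 0. -/

import Mathlib

open Quaternion

/-- The imaginary unit `i` of the real quaternions. -/
def qI : ℍ[ℝ] := ⟨0, 1, 0, 0⟩

/-- The imaginary unit `j` of the real quaternions. -/
def qJ : ℍ[ℝ] := ⟨0, 0, 1, 0⟩

/-- The imaginary unit `k` of the real quaternions. -/
def qK : ℍ[ℝ] := ⟨0, 0, 0, 1⟩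

/-- The HR*-derivative of `f : ℍ → ℍ` at `q`:
`(1/4) (D₁ f(q) + (Dᵢ f(q))·i + (Dⱼ f(q))·j + (Dₖ f(q))·k)`,
where `D_v f(q)` is the real Fréchet derivative of `f` at `q` in direction `v`. -/
noncomputable def HRStarDeriv (f : ℍ[ℝ] → ℍ[ℝ]) (q : ℍ[ℝ]) : ℍ[ℝ] :=
  (4 : ℍ[ℝ])⁻¹ * (fderiv ℝ f q 1 + fderiv ℝ f q qI * qI
    + fderiv ℝ f q qJ * qJ + fderiv ℝ f q qK * qK)

lemma hasFDerivAt_norm_quat (w : ℍ[ℝ]) (hw : w ≠ 0) :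
    HasFDerivAt (fun v : ℍ[ℝ] => ‖v‖) (‖w‖⁻¹ • innerSL ℝ w) w := by
  have h1 : HasFDerivAt (fun v : ℍ[ℝ] => ‖v‖ ^ 2) (2 • innerSL ℝ w) w :=
    (hasStrictFDerivAt_norm_sq w).hasFDerivAt
  have hnz : (‖w‖ : ℝ) ^ 2 ≠ 0 := pow_ne_zero 2 (norm_ne_zero_iff.2 hw)
  have h2 := (Real.hasDerivAt_sqrt hnz).comp_hasFDerivAt w h1
  have heq : (fun v : ℍ[ℝ] => Real.sqrt (‖v‖ ^ 2)) = fun v : ℍ[ℝ] => ‖v‖ := by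
    funext v; rw [Real.sqrt_sq (norm_nonneg v)]
  rw [show ((fun x => Real.sqrt x) ∘ fun v : ℍ[ℝ] => ‖v‖ ^ 2) = fun v : ℍ[ℝ] => ‖v‖ from heq] at h2
  refine h2.congr_fderiv ?_
  ext v
  have : Real.sqrt (‖w‖ ^ 2) = ‖w‖ := Real.sqrt_sq (norm_nonneg w)
  simp [this, smul_smul]
  field_simp

open RealInnerProductSpace in
/-- ∂|w|/∂w* = (1/4)·w/|w| for w ≠ 0. -/
theorem hr_star_deriv_norm (w : ℍ[ℝ]) (hw : w ≠ 0) :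
    HRStarDeriv (fun v => ((‖v‖ : ℝ) : ℍ[ℝ])) w = (4 : ℍ[ℝ])⁻¹ * (w / ((‖w‖ : ℝ) : ℍ[ℝ])) := by
  have hcoe : ∀ r : ℝ, ((r : ℝ) : ℍ[ℝ]) = r • (1 : ℍ[ℝ]) := by
    intro r; rw [← Quaternion.coe_one, Quaternion.smul_coe, mul_one]
  have hf : HasFDerivAt (fun v : ℍ[ℝ] => ((‖v‖ : ℝ) : ℍ[ℝ]))
      ((‖w‖⁻¹ • innerSL ℝ w).smulRight (1 : ℍ[ℝ])) w := by
    have := (hasFDerivAt_norm_quat w hw).smul_const (1 : ℍ[ℝ])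
    have e : (fun v : ℍ[ℝ] => ((‖v‖ : ℝ) : ℍ[ℝ])) = fun v => ‖v‖ • (1 : ℍ[ℝ]) :=
      funext fun v => hcoe _
    rw [e]; exact this
  have key : ∀ v, fderiv ℝ (fun v : ℍ[ℝ] => ((‖v‖ : ℝ) : ℍ[ℝ])) w v
      = ((‖w‖⁻¹ * ⟪w, v⟫ : ℝ) : ℍ[ℝ]) := by
    intro v
    rw [hf.fderiv, hcoe]
    simp [smul_smul]
  have hnorm : ‖w‖ ≠ 0 := norm_ne_zero_iff.2 hw
  unfold HRStarDeriv
  rw [key, key, key, key]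
  simp only [Quaternion.inner_def]
  rw [div_eq_mul_inv, ← Quaternion.coe_inv]
  congr 1
  set r : ℝ := ‖w‖⁻¹ with hr
  have hr' : ‖w‖ * r = 1 := mul_inv_cancel₀ hnorm
  ext <;>
    simp only [Quaternion.re_mul, Quaternion.imI_mul, Quaternion.imJ_mul, Quaternion.imK_mul,
      Quaternion.re_add, Quaternion.imI_add, Quaternion.imJ_add, Quaternion.imK_add,
      Quaternion.re_star, Quaternion.imI_star, Quaternion.imJ_star, Quaternion.imK_star] <;>
    simp [qI, qJ, qK] <;> ring
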